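/- The map sending an r-tuple ν = (ν^{(1)}, …, ν^{(r)}) of partitions to the sequence (d_0(ν), d_1(ν), …, d_s(ν)), where s is the largest part occurring in any ν^{(k)} (s = 0 if all are empty), is a bijection from the set of r-tuples ν of partitions satisfying P^{(k)}_n(d_n(ν)) ≥ 0 for all n ≥ 1 and 1 ≤ k ≤ r onto the set of valid labels for the data (ℓ_a, m_a); moreover under this bijection, for 1 ≤ n ≤ s, the k-th coordinate of δ_n − δ_{n+1} equals ν^{(k)}_n. -/

import Mathlib

open Finset

/-- `P^{(k)}_n(d)` for the data `(ℓ_a, m_a)` with `N` factors: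
`Σ_a min(n, m_a)·[k = ℓ_a] − Σ_j c_{jk}·d(j)`. -/
def Pfun {r N : ℕ} (C : Matrix (Fin r) (Fin r) ℤ) (ℓ : Fin N → Fin r) (m : Fin N → ℕ)
    (n : ℕ) (k : Fin r) (d : Fin r → ℤ) : ℤ :=
  (∑ a : Fin N, (min n (m a) : ℤ) * (if k = ℓ a then 1 else 0)) - ∑ j : Fin r, C j k * d j

/-- The `n`-th term `d_n` of a label presented as a list `(d_0, …, d_s)`. -/
def dAt {r : ℕ} (L : List (Fin r → ℤ)) (n : ℕ) : Fin r → ℤ := L.getD n 0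

/-- `δ_i = d_i − d_{i−1}` for `1 ≤ i ≤ s`, and `δ_i = 0` for `i > s` (so `δ_{s+1} = 0`). -/
def deltaAt {r : ℕ} (L : List (Fin r → ℤ)) (i : ℕ) : Fin r → ℤ :=
  if i < L.length then dAt L i - dAt L (i - 1) else 0

/-- A valid label `(d_0, …, d_s)` for the data `(ℓ_a, m_a)`:
(i) `0 = d_0 ≺ d_1 ≺ ⋯ ≺ d_s`, (ii) `P^{(k)}_n(d_n) ≥ 0` for `0 ≤ n ≤ s`, `k`,
(iii) `δ_i ≽ δ_{i+1}` for `1 ≤ i ≤ s` (with `δ_{s+1} = 0`). -/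
def IsValidLabel {r N : ℕ} (C : Matrix (Fin r) (Fin r) ℤ) (ℓ : Fin N → Fin r)
    (m : Fin N → ℕ) (L : List (Fin r → ℤ)) : Prop :=
  L ≠ [] ∧ dAt L 0 = 0 ∧
  (∀ i, 1 ≤ i → i < L.length → dAt L (i - 1) < dAt L i) ∧
  (∀ n, n < L.length → ∀ k, 0 ≤ Pfun C ℓ m n k (dAt L n)) ∧
  (∀ i, 1 ≤ i → i < L.length → deltaAt L (i + 1) ≤ deltaAt L i)

/-- `binom(a, b)` for integers, with `binom(a, b) = 0` whenever `a < b`. -/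
def ibinom (a b : ℤ) : ℕ := if a < b then 0 else Nat.choose a.toNat b.toNat

/-- The multiplicity `mult(𝐝) = Π_{n=1}^s Π_k binom(P^{(k)}_n(d_n) + (δ_n − δ_{n+1})(k), (δ_n − δ_{n+1})(k))`. -/
def mult {r N : ℕ} (C : Matrix (Fin r) (Fin r) ℤ) (ℓ : Fin N → Fin r) (m : Fin N → ℕ)
    (L : List (Fin r → ℤ)) : ℕ :=
  ∏ n ∈ Finset.Icc 1 (L.length - 1), ∏ k : Fin r,
    ibinom (Pfun C ℓ m n k (dAt L n) + (deltaAt L n k - deltaAt L (n + 1) k))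
      (deltaAt L n k - deltaAt L (n + 1) k)

/-- `d_n(ν)(k) = Σ_{h≥1} min(n, h)·ν^{(k)}_h` for a tuple of partitions given as multisets
of (positive) parts. -/
def dnu' {r : ℕ} (ν : Fin r → Multiset ℕ) (n : ℕ) : Fin r → ℤ :=
  fun k => ((ν k).map fun h => (min n h : ℤ)).sum

/-- The largest part occurring in any `ν^{(k)}` (0 if all are empty). -/
def snu {r : ℕ} (ν : Fin r → Multiset ℕ) : ℕ :=
  Finset.univ.sup fun k : Fin r => (ν k).sup

/-- The label `(d_0(ν), d_1(ν), …, d_s(ν))` attached to a tuple of partitions. -/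
def toLabel {r : ℕ} (ν : Fin r → Multiset ℕ) : List (Fin r → ℤ) :=
  (List.range (snu ν + 1)).map (dnu' ν)

section Aux
variable {r : ℕ}

lemma dnu'_eq (ν : Fin r → Multiset ℕ) (n : ℕ) (k : Fin r) :
    dnu' ν n k = ((ν k).map fun h : ℕ => min (n:ℤ) (h:ℤ)).sum := by
  simp [dnu', Multiset.bind_singleton, Multiset.map_map, Function.comp]

lemma msum_sub (s : Multiset ℕ) (f g : ℕ → ℤ) :
    (s.map f).sum - (s.map g).sum = (s.map fun x => f x - g x).sum := by
  induction s using Multiset.induction_on with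
  | empty => simp
  | cons a s ih => simp only [Multiset.map_cons, Multiset.sum_cons, ← ih]; ring

lemma toLabel_length (ν : Fin r → Multiset ℕ) : (toLabel ν).length = snu ν + 1 := by
  simp [toLabel]

lemma dAt_toLabel (ν : Fin r → Multiset ℕ) {n : ℕ} (hn : n ≤ snu ν) :
    dAt (toLabel ν) n = dnu' ν n := by
  rw [dAt, toLabel, List.getD_eq_getElem _ _ (by simpa using Nat.lt_succ_of_le hn)]
  simp

lemma dAt_of_ge {L : List (Fin r → ℤ)} {n : ℕ} (h : L.length ≤ n) : dAt L n = 0 := by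
  rw [dAt, List.getD_eq_default _ _ h]

lemma deltaAt_of_ge {L : List (Fin r → ℤ)} {n : ℕ} (h : L.length ≤ n) : deltaAt L n = 0 := by
  rw [deltaAt, if_neg (by omega)]

lemma dnu'_zero (ν : Fin r → Multiset ℕ) : dnu' ν 0 = 0 := by
  funext k
  simp [dnu'_eq]

lemma part_le_snu {ν : Fin r → Multiset ℕ} {k : Fin r} {p : ℕ} (hp : p ∈ ν k) : p ≤ snu ν :=
  le_trans (Multiset.le_sup hp) (Finset.le_sup (f := fun k => (ν k).sup) (Finset.mem_univ k))

lemma dnu'_stable (ν : Fin r → Multiset ℕ) {n : ℕ} (hn : snu ν ≤ n) :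
    dnu' ν n = dnu' ν (snu ν) := by
  funext k
  rw [dnu'_eq, dnu'_eq]
  refine congrArg Multiset.sum (Multiset.map_congr rfl ?_)
  intro h hh
  have hle := part_le_snu hh
  rw [min_eq_right (by exact_mod_cast le_trans hle hn),
    min_eq_right (by exact_mod_cast hle)]

lemma sum_ind (s : Multiset ℕ) (n : ℕ) :
    (s.map fun h => if h = n then (1:ℤ) else 0).sum = s.count n := by
  induction s using Multiset.induction_on with
  | empty => simp
  | cons a s ih =>
    rw [Multiset.map_cons, Multiset.sum_cons, ih, Multiset.count_cons]
    rcases eq_or_ne a n with h | h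
    · simp [h]; ring
    · simp [h, Ne.symm h]

/-- `δ_n(ν)(k) = #{parts of ν^{(k)} that are ≥ n}` (as an indicator sum), `1 ≤ n ≤ s`. -/
lemma delta_toLabel (ν : Fin r → Multiset ℕ) {n : ℕ} (h1 : 1 ≤ n) (h2 : n ≤ snu ν)
    (k : Fin r) :
    deltaAt (toLabel ν) n k = ((ν k).map fun h : ℕ => if n ≤ h then (1:ℤ) else 0).sum := by
  obtain ⟨p, rfl⟩ : ∃ p, n = p + 1 := ⟨n - 1, by omega⟩
  rw [deltaAt, if_pos (by rw [toLabel_length]; omega), dAt_toLabel ν h2,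
    dAt_toLabel ν (by omega)]
  show dnu' ν (p+1) k - dnu' ν (p+1-1) k = _
  simp only [Nat.add_sub_cancel]
  rw [dnu'_eq, dnu'_eq, msum_sub]
  refine congrArg Multiset.sum (Multiset.map_congr rfl ?_)
  intro h _
  push_cast
  split <;> rename_i hc
  · have : (p:ℤ) + 1 ≤ h := by exact_mod_cast hc
    omega
  · have : ¬ ((p:ℤ) + 1 ≤ h) := by exact_mod_cast hc
    omega

end Aux

section Aux2
variable {r : ℕ}

/-- The central count identity: `δ_n(k) − δ_{n+1}(k) = ν^{(k)}_n` for `n ≥ 1`. -/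
lemma delta_count (ν : Fin r → Multiset ℕ) {n : ℕ} (h1 : 1 ≤ n) (k : Fin r) :
    deltaAt (toLabel ν) n k - deltaAt (toLabel ν) (n + 1) k = ((ν k).count n : ℤ) := by
  rcases le_or_gt (n + 1) (snu ν) with hc | hc
  · rw [delta_toLabel ν h1 (by omega) k, delta_toLabel ν (by omega) hc k, msum_sub,
      ← sum_ind (ν k) n]
    refine congrArg Multiset.sum (Multiset.map_congr rfl ?_)
    intro h _
    rcases eq_or_ne h n with rfl | hne
    · simp
    · by_cases hle : n + 1 ≤ h
      · rw [if_pos (by omega), if_pos hle, if_neg hne]; ring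
      · by_cases hle2 : n ≤ h
        · omega
        · rw [if_neg hle2, if_neg hle, if_neg hne]; ring
  · rw [deltaAt_of_ge (L := toLabel ν) (n := n+1) (by rw [toLabel_length]; omega)]
    rcases le_or_gt n (snu ν) with hc2 | hc2
    · rw [delta_toLabel ν h1 hc2 k, ← sum_ind (ν k) n]
      simp only [Pi.zero_apply, sub_zero]
      refine congrArg Multiset.sum (Multiset.map_congr rfl ?_)
      intro h hh
      have := part_le_snu hh
      by_cases he : h = n
      · simp [he]
      · rw [if_neg he, if_neg (by omega)]
    · rw [deltaAt_of_ge (L := toLabel ν) (n := n) (by rw [toLabel_length]; omega)]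
      have : (ν k).count n = 0 := by
        rw [Multiset.count_eq_zero]
        intro hmem
        exact absurd (part_le_snu hmem) (by omega)
      simp [this]

lemma dnu'_mono (ν : Fin r → Multiset ℕ) {n n' : ℕ} (h : n ≤ n') :
    dnu' ν n ≤ dnu' ν n' := by
  intro k
  rw [dnu'_eq, dnu'_eq]
  refine Multiset.sum_map_le_sum_map _ _ ?_
  intro h' _
  exact min_le_min (Nat.cast_le.mpr h) le_rfl

lemma dnu'_strict (hr : 0 < r) (ν : Fin r → Multiset ℕ) {n : ℕ} (h1 : 1 ≤ n)
    (h2 : n ≤ snu ν) : dnu' ν (n - 1) < dnu' ν n := by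
  have : Nonempty (Fin r) := Fin.pos_iff_nonempty.mp hr
  have hne : (Finset.univ : Finset (Fin r)).Nonempty := Finset.univ_nonempty
  obtain ⟨k, -, hk⟩ := Finset.exists_mem_eq_sup Finset.univ hne fun k : Fin r => (ν k).sup
  have hsup : (ν k).sup = snu ν := hk.symm
  have hex : ∃ p ∈ ν k, n ≤ p := by
    by_contra hcon
    push_neg at hcon
    have : (ν k).sup ≤ n - 1 := Multiset.sup_le.mpr fun b hb => by
      have := hcon b hb; omega
    omega
  obtain ⟨p, hp, hnp⟩ := hex
  refine lt_of_le_of_ne (dnu'_mono ν (by omega)) fun hEq => ?_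
  have hkEq : dnu' ν (n-1) k = dnu' ν n k := congrFun hEq k
  have hlt : dnu' ν (n-1) k < dnu' ν n k := by
    rw [dnu'_eq, dnu'_eq]
    refine Multiset.sum_lt_sum ?_ ⟨p, hp, ?_⟩
    · intro i _
      exact min_le_min (by exact_mod_cast Nat.sub_le n 1) le_rfl
    · have e1 : min ((n-1:ℕ):ℤ) (p:ℤ) = ((n-1:ℕ):ℤ) := min_eq_left (by exact_mod_cast by omega)
      have e2 : min ((n:ℕ):ℤ) (p:ℤ) = ((n:ℕ):ℤ) := min_eq_left (by exact_mod_cast hnp)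
      rw [e1, e2]
      exact_mod_cast by omega
  omega

end Aux2

section Aux3
variable {r N : ℕ}

lemma Pfun_mono (C : Matrix (Fin r) (Fin r) ℤ) (ℓ : Fin N → Fin r) (m : Fin N → ℕ)
    {n n' : ℕ} (h : n ≤ n') (k : Fin r) (d : Fin r → ℤ) :
    Pfun C ℓ m n k d ≤ Pfun C ℓ m n' k d := by
  unfold Pfun
  apply sub_le_sub_right
  apply Finset.sum_le_sum
  intro a _
  apply mul_le_mul_of_nonneg_right (min_le_min (by exact_mod_cast h) le_rfl)
  split <;> norm_num

lemma Pfun_zero (C : Matrix (Fin r) (Fin r) ℤ) (ℓ : Fin N → Fin r) (m : Fin N → ℕ)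
    (k : Fin r) : Pfun C ℓ m 0 k 0 = 0 := by
  unfold Pfun
  have : ∀ a : Fin N, min ((0:ℕ):ℤ) ((m a : ℕ):ℤ) = 0 := fun a =>
    min_eq_left (by exact_mod_cast Nat.zero_le _)
  simp [this]

/-- Abel-summation style telescoping. -/
lemma tele (g : ℕ → ℤ) (n : ℕ) : ∀ s : ℕ,
    ∑ h ∈ Finset.Icc 1 s, (g h - g (h+1)) * min (n:ℤ) (h:ℤ)
      = (∑ h ∈ Finset.Icc 1 (min n s), g h) - (min n s : ℕ) * g (s+1) := by
  intro s
  induction s with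
  | zero => simp
  | succ s ih =>
    rw [Finset.sum_Icc_succ_top (by omega), ih, ← Nat.cast_min]
    rcases le_or_gt n s with hc | hc
    · rw [min_eq_left hc, min_eq_left (show n ≤ s + 1 by omega)]
      push_cast
      ring
    · rw [min_eq_right (show s ≤ n by omega), min_eq_right (show s + 1 ≤ n by omega),
        Finset.sum_Icc_succ_top (by omega)]
      push_cast
      ring

/-- `Σ_{h=1}^n δ_h = d_n` for `n < length`, given `d_0 = 0`. -/
lemma sum_delta {L : List (Fin r → ℤ)} (h0 : dAt L 0 = 0) :
    ∀ n, n < L.length → ∀ k, ∑ h ∈ Finset.Icc 1 n, deltaAt L h k = dAt L n k := by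
  intro n
  induction n with
  | zero => intro _ k; simp [congrFun h0 k]
  | succ n ih =>
    intro hn k
    rw [Finset.sum_Icc_succ_top (by omega), ih (by omega) k, deltaAt, if_pos hn]
    simp

end Aux3

section Aux4
variable {r : ℕ}

/-- The inverse map: from a label `L` to the tuple of partitions with
`ν^{(k)}_n = (δ_n − δ_{n+1})(k)` for `1 ≤ n ≤ s`. -/
def invLabel (L : List (Fin r → ℤ)) : Fin r → Multiset ℕ :=
  fun k => (Finset.Icc 1 (L.length - 1)).val.bind fun n =>
    Multiset.replicate ((deltaAt L n k - deltaAt L (n+1) k).toNat) n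

lemma mem_invLabel {L : List (Fin r → ℤ)} {k : Fin r} {p : ℕ} (hp : p ∈ invLabel L k) :
    1 ≤ p ∧ p ≤ L.length - 1 := by
  obtain ⟨n, hn, hp2⟩ := Multiset.mem_bind.mp hp
  rw [Multiset.eq_of_mem_replicate hp2]
  exact Finset.mem_Icc.mp (Finset.mem_val.mp hn)

lemma count_invLabel (L : List (Fin r → ℤ)) (k : Fin r) (h : ℕ) :
    (invLabel L k).count h =
      if 1 ≤ h ∧ h ≤ L.length - 1
      then (deltaAt L h k - deltaAt L (h+1) k).toNat else 0 := by
  unfold invLabel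
  rw [Multiset.count_bind]
  have : ((Finset.Icc 1 (L.length - 1)).val.map fun n =>
      Multiset.count h (Multiset.replicate ((deltaAt L n k - deltaAt L (n+1) k).toNat) n)).sum
      = ∑ n ∈ Finset.Icc 1 (L.length - 1),
        Multiset.count h (Multiset.replicate ((deltaAt L n k - deltaAt L (n+1) k).toNat) n) := rfl
  rw [this]
  have : ∀ n ∈ Finset.Icc 1 (L.length - 1),
      Multiset.count h (Multiset.replicate ((deltaAt L n k - deltaAt L (n+1) k).toNat) n)
      = if n = h then (deltaAt L n k - deltaAt L (n+1) k).toNat else 0 := by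
    intro n _
    rw [Multiset.count_replicate]
  rw [Finset.sum_congr rfl this, Finset.sum_ite_eq' (Finset.Icc 1 (L.length - 1)) h
    fun n => (deltaAt L n k - deltaAt L (n+1) k).toNat]
  simp [Finset.mem_Icc]

lemma dnu'_invLabel {L : List (Fin r → ℤ)} (hL : L ≠ [])
    (h0 : dAt L 0 = 0)
    (hmono : ∀ i, 1 ≤ i → i < L.length → deltaAt L (i + 1) ≤ deltaAt L i)
    {n : ℕ} (hn : n ≤ L.length - 1) :
    dnu' (invLabel L) n = dAt L n := by
  have hdnn : ∀ h, 1 ≤ h → h ≤ L.length - 1 → ∀ k : Fin r,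
      0 ≤ deltaAt L h k - deltaAt L (h+1) k := by
    intro h h1 h2 k
    exact sub_nonneg.mpr (hmono h h1 (by omega) k)
  funext k
  rw [dnu'_eq]
  unfold invLabel
  rw [Multiset.map_bind, Multiset.sum_bind]
  have : ((Finset.Icc 1 (L.length - 1)).val.map fun h =>
      ((Multiset.replicate ((deltaAt L h k - deltaAt L (h+1) k).toNat) h).map
        fun x : ℕ => min (n:ℤ) (x:ℤ)).sum).sum
      = ∑ h ∈ Finset.Icc 1 (L.length - 1),
        ((Multiset.replicate ((deltaAt L h k - deltaAt L (h+1) k).toNat) h).map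
          fun x : ℕ => min (n:ℤ) (x:ℤ)).sum := rfl
  rw [this]
  have step : ∀ h ∈ Finset.Icc 1 (L.length - 1),
      ((Multiset.replicate ((deltaAt L h k - deltaAt L (h+1) k).toNat) h).map
        fun x : ℕ => min (n:ℤ) (x:ℤ)).sum
      = (deltaAt L h k - deltaAt L (h+1) k) * min (n:ℤ) (h:ℤ) := by
    intro h hh
    rw [Multiset.map_replicate, Multiset.sum_replicate, nsmul_eq_mul]
    obtain ⟨h1, h2⟩ := Finset.mem_Icc.mp hh
    rw [Int.toNat_of_nonneg (hdnn h h1 h2 k)]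
  rw [Finset.sum_congr rfl step]
  have tele' := tele (fun h => deltaAt L h k) n (L.length - 1)
  have heq : ∀ h ∈ Finset.Icc 1 (L.length - 1),
      (deltaAt L h k - deltaAt L (h+1) k) * min (n:ℤ) (h:ℤ)
      = ((fun h => deltaAt L h k) h - (fun h => deltaAt L h k) (h+1)) * min (n:ℤ) (h:ℤ) := by
    intro h _; rfl
  rw [Finset.sum_congr rfl heq, tele', min_eq_left hn,
    deltaAt_of_ge (L := L) (n := L.length - 1 + 1) (by omega)]
  simp only [Pi.zero_apply, mul_zero, sub_zero]
  exact sum_delta h0 n (by have := List.length_pos_iff.mpr hL; omega) k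

end Aux4

section Aux5
variable {r : ℕ}

lemma snu_invLabel_le (L : List (Fin r → ℤ)) : snu (invLabel L) ≤ L.length - 1 :=
  Finset.sup_le fun k _ => Multiset.sup_le.mpr fun _ hp => (mem_invLabel hp).2

lemma snu_invLabel {L : List (Fin r → ℤ)} (hL : L ≠ [])
    (hstrict : ∀ i, 1 ≤ i → i < L.length → dAt L (i - 1) < dAt L i) :
    snu (invLabel L) = L.length - 1 := by
  have hlen : 1 ≤ L.length := List.length_pos_iff.mpr hL
  refine le_antisymm (snu_invLabel_le L) ?_
  set s := L.length - 1 with hs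
  rcases Nat.eq_zero_or_pos s with h0 | h0
  · omega
  · obtain ⟨-, k, hk⟩ := Pi.lt_def.mp (hstrict s h0 (by omega))
    have hδ : 0 < deltaAt L s k - deltaAt L (s+1) k := by
      rw [deltaAt, if_pos (by omega), deltaAt_of_ge (L := L) (n := s+1) (by omega)]
      simp only [Pi.sub_apply, Pi.zero_apply]
      omega
    have hcount : 0 < (invLabel L k).count s := by
      rw [count_invLabel, if_pos ⟨h0, le_rfl⟩]
      omega
    have hmem : s ∈ invLabel L k := Multiset.count_pos.mp hcount
    calc s ≤ (invLabel L k).sup := Multiset.le_sup hmem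
    _ ≤ snu (invLabel L) := Finset.le_sup (f := fun k => (invLabel L k).sup) (Finset.mem_univ k)

lemma toLabel_invLabel {L : List (Fin r → ℤ)} (hL : L ≠ [])
    (h0 : dAt L 0 = 0)
    (hstrict : ∀ i, 1 ≤ i → i < L.length → dAt L (i - 1) < dAt L i)
    (hmono : ∀ i, 1 ≤ i → i < L.length → deltaAt L (i + 1) ≤ deltaAt L i) :
    toLabel (invLabel L) = L := by
  have hlen : 1 ≤ L.length := List.length_pos_iff.mpr hL
  have hsnu := snu_invLabel hL hstrict
  apply List.ext_getElem
  · rw [toLabel_length, hsnu]; omega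
  · intro n hn1 hn2
    simp only [toLabel, List.getElem_map, List.getElem_range]
    have hns : n ≤ L.length - 1 := by rw [toLabel_length, hsnu] at hn1; omega
    rw [dnu'_invLabel hL h0 hmono hns]
    rw [dAt, List.getD_eq_getElem _ _ hn2]

end Aux5

section Aux6
variable {r N : ℕ}

lemma toLabel_valid (hr : 0 < r) (C : Matrix (Fin r) (Fin r) ℤ) (ℓ : Fin N → Fin r)
    (m : Fin N → ℕ) (ν : Fin r → Multiset ℕ)
    (hP : ∀ n, 1 ≤ n → ∀ k, 0 ≤ Pfun C ℓ m n k (dnu' ν n)) :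
    IsValidLabel C ℓ m (toLabel ν) := by
  refine ⟨?_, ?_, ?_, ?_, ?_⟩
  · intro hnil
    have := congrArg List.length hnil
    rw [toLabel_length] at this
    simp at this
  · rw [dAt_toLabel ν (Nat.zero_le _), dnu'_zero]
  · intro i h1 h2
    rw [toLabel_length] at h2
    rw [dAt_toLabel ν (by omega), dAt_toLabel ν (by omega)]
    exact dnu'_strict hr ν h1 (by omega)
  · intro n hn k
    rw [toLabel_length] at hn
    rcases Nat.eq_zero_or_pos n with rfl | h1
    · rw [dAt_toLabel ν (Nat.zero_le _), dnu'_zero, Pfun_zero]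
    · rw [dAt_toLabel ν (by omega)]
      exact hP n h1 k
  · intro i h1 h2
    rw [toLabel_length] at h2
    rw [Pi.le_def]
    intro k
    rcases le_or_gt (i+1) (snu ν) with hc | hc
    · rw [delta_toLabel ν (by omega) hc k, delta_toLabel ν h1 (by omega) k]
      refine Multiset.sum_map_le_sum_map _ _ ?_
      intro h _
      split <;> split <;> omega
    · rw [deltaAt_of_ge (L := toLabel ν) (n := i+1) (by rw [toLabel_length]; omega),
        delta_toLabel ν h1 (by omega) k]
      simp only [Pi.zero_apply]
      have : ((ν k).map fun _ : ℕ => (0:ℤ)).sum ≤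
          ((ν k).map fun h : ℕ => if i ≤ h then (1:ℤ) else 0).sum := by
        refine Multiset.sum_map_le_sum_map _ _ ?_
        intro h _
        split <;> omega
      simpa using this

lemma invLabel_mem (C : Matrix (Fin r) (Fin r) ℤ) (ℓ : Fin N → Fin r) (m : Fin N → ℕ)
    {L : List (Fin r → ℤ)} (hV : IsValidLabel C ℓ m L) :
    (∀ k, ∀ p ∈ invLabel L k, 0 < p) ∧
      ∀ n, 1 ≤ n → ∀ k, 0 ≤ Pfun C ℓ m n k (dnu' (invLabel L) n) := by
  obtain ⟨hne, h0, hstrict, hP, hmono⟩ := hV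
  have hlen : 1 ≤ L.length := List.length_pos_iff.mpr hne
  refine ⟨fun k p hp => (mem_invLabel hp).1, ?_⟩
  intro n h1 k
  rcases le_or_gt n (L.length - 1) with hc | hc
  · rw [dnu'_invLabel hne h0 hmono hc]
    exact hP n (by omega) k
  · have hsn : snu (invLabel L) ≤ n := le_trans (snu_invLabel_le L) (by omega)
    rw [dnu'_stable _ hsn, dnu'_invLabel hne h0 hmono (snu_invLabel_le L)]
    calc (0:ℤ) ≤ Pfun C ℓ m (snu (invLabel L)) k (dAt L (snu (invLabel L))) :=
          hP _ (by have := snu_invLabel_le L; omega) k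
    _ ≤ _ := Pfun_mono C ℓ m hsn k _

lemma invLabel_toLabel (ν : Fin r → Multiset ℕ) (hpos : ∀ k, ∀ p ∈ ν k, 0 < p) :
    invLabel (toLabel ν) = ν := by
  funext k
  refine Multiset.ext.mpr fun h => ?_
  rw [count_invLabel, toLabel_length]
  simp only [Nat.add_sub_cancel]
  by_cases h1 : 1 ≤ h ∧ h ≤ snu ν
  · rw [if_pos h1, delta_count ν h1.1 k, Int.toNat_natCast]
  · rw [if_neg h1]
    push_neg at h1
    symm
    rw [Multiset.count_eq_zero]
    rcases Nat.eq_zero_or_pos h with rfl | hp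
    · intro hm
      exact absurd (hpos k 0 hm) (lt_irrefl 0)
    · have := h1 hp
      intro hm
      exact absurd (part_le_snu hm) (by omega)

end Aux6

/-- `ν ↦ (d_0(ν), …, d_s(ν))` is a bijection from the tuples of partitions with
all `P^{(k)}_n(d_n(ν)) ≥ 0` onto the valid labels, and under it `(δ_n − δ_{n+1})(k) = ν^{(k)}_n`. -/
theorem stmt1 {r N : ℕ} (hr : 0 < r) (hN : 0 < N)
    (C : Matrix (Fin r) (Fin r) ℤ)
    (hdiag : ∀ i, C i i = 2)
    (hsym : ∀ i j, C i j = C j i)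
    (hoff : ∀ i j, i ≠ j → C i j = 0 ∨ C i j = -1)
    (ℓ : Fin N → Fin r) (m : Fin N → ℕ)
    (A : Set (Fin r → Multiset ℕ))
    (hA : A = {ν | (∀ k, ∀ p ∈ ν k, 0 < p) ∧
      ∀ n, 1 ≤ n → ∀ k, 0 ≤ Pfun C ℓ m n k (dnu' ν n)}) :
    Set.BijOn toLabel A {L | IsValidLabel C ℓ m L} ∧
    ∀ ν ∈ A, ∀ n, 1 ≤ n → n ≤ snu ν → ∀ k,
      deltaAt (toLabel ν) n k - deltaAt (toLabel ν) (n + 1) k = ((ν k).count n : ℤ) := by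
  subst hA
  constructor
  · refine Set.InvOn.bijOn (f' := invLabel) ⟨?_, ?_⟩ ?_ ?_
    · intro ν hν
      exact invLabel_toLabel ν hν.1
    · intro L hL
      exact toLabel_invLabel hL.1 hL.2.1 hL.2.2.1 hL.2.2.2.2
    · intro ν hν
      exact toLabel_valid hr C ℓ m ν hν.2
    · intro L hL
      exact invLabel_mem C ℓ m hL
  · intro ν _ n h1 _ k
    exact delta_count ν h1 k
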